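/- Let a₁,…,a_N (N ≥ 2) be vectors in a complex inner product space. Then ∑_{s=1}^{N} ‖a_s‖² ≥ (1/(2N−2)) [ ∑_{1≤s<t≤N} ‖a_s + a_t‖² + (2/(N(N−1))) ( ∑_{1≤s<t≤N} ‖a_s − a_t‖ )² ]. -/

import Mathlib

open Finset

lemma aux_sum_pairs {N : ℕ} (h : Fin N → ℝ) :
    ∑ s : Fin N, ∑ t ∈ Finset.Ioi s, (h s + h t) = ((N : ℝ) - 1) * ∑ s, h s := by
  have this1 := Finset.sum_sum_Ioi_add_eq_sum_sum_off_diag (fun i j : Fin N => h i)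
  simp only [add_comm] at this1
  rw [this1]
  simp only [Finset.compl_singleton, Finset.sum_erase_eq_sub (Finset.mem_univ _)]
  rw [Finset.sum_sub_distrib, Finset.sum_const, Finset.card_univ, Fintype.card_fin,
    nsmul_eq_mul, sub_mul, one_mul]

lemma aux_card {N : ℕ} :
    ((Finset.univ.sigma fun s : Fin N => Finset.Ioi s).card : ℝ) ≤ (N : ℝ) * ((N : ℝ) - 1) / 2 := by
  rcases Nat.eq_zero_or_pos N with h0 | h0
  · subst h0; simp
  rw [Finset.card_sigma]
  have : ∀ s : Fin N, (Finset.Ioi s).card = N - 1 - (s : ℕ) := fun s => Fin.card_Ioi s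
  simp_rw [this]
  have hcard : ∑ s : Fin N, (N - 1 - (s : ℕ)) = ∑ k ∈ Finset.range N, k := by
    rw [Finset.sum_range fun k => k]
    apply Finset.sum_nbij' (fun s : Fin N => (Fin.rev s : Fin N)) (fun s : Fin N => (Fin.rev s))
      (by simp) (by simp) (by simp) (by simp)
    intro s _
    simp [Fin.rev]
    omega
  rw [hcard]
  have : (∑ k ∈ Finset.range N, k) * 2 = N * (N - 1) := Finset.sum_range_id_mul_two N
  have h2 : ((∑ k ∈ Finset.range N, k : ℕ) : ℝ) * 2 = (N : ℝ) * ((N : ℝ) - 1) := by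
    rw [← Nat.cast_ofNat, ← Nat.cast_mul, this]
    push_cast [Nat.cast_sub h0]
    ring
  linarith

theorem stmt_18 {E : Type*} [NormedAddCommGroup E] [InnerProductSpace ℂ E]
    {N : ℕ} (hN : 2 ≤ N) (a : Fin N → E) :
    ∑ s, ‖a s‖ ^ 2 ≥
      (1 / (2 * (N : ℝ) - 2)) *
        ((∑ s : Fin N, ∑ t ∈ Finset.Ioi s, ‖a s + a t‖ ^ 2)
          + (2 / ((N : ℝ) * ((N : ℝ) - 1))) *
            (∑ s : Fin N, ∑ t ∈ Finset.Ioi s, ‖a s - a t‖) ^ 2) := by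
  have hN1 : (1 : ℝ) ≤ (N : ℝ) := by exact_mod_cast Nat.one_le_of_lt hN
  have hN2 : (2 : ℝ) ≤ (N : ℝ) := by exact_mod_cast hN
  set P : ℝ := ∑ s : Fin N, ∑ t ∈ Finset.Ioi s, ‖a s + a t‖ ^ 2 with hP
  set Q2 : ℝ := ∑ s : Fin N, ∑ t ∈ Finset.Ioi s, ‖a s - a t‖ ^ 2 with hQ2
  set Q : ℝ := ∑ s : Fin N, ∑ t ∈ Finset.Ioi s, ‖a s - a t‖ with hQ
  -- parallelogram identity summed
  have hpar : P + Q2 = 2 * ((N : ℝ) - 1) * ∑ s, ‖a s‖ ^ 2 := by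
    have : P + Q2 = ∑ s : Fin N, ∑ t ∈ Finset.Ioi s,
        (2 * ‖a s‖ ^ 2 + 2 * ‖a t‖ ^ 2) := by
      rw [hP, hQ2, ← Finset.sum_add_distrib]
      refine Finset.sum_congr rfl fun s _ => ?_
      rw [← Finset.sum_add_distrib]
      refine Finset.sum_congr rfl fun t _ => ?_
      have := parallelogram_law_with_norm ℂ (a s) (a t)
      nlinarith [this]
    rw [this, aux_sum_pairs (fun s => 2 * ‖a s‖ ^ 2), Finset.mul_sum, Finset.mul_sum]
    exact Finset.sum_congr rfl fun x _ => by ring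
  -- Cauchy-Schwarz
  have hCS : Q ^ 2 ≤ ((N : ℝ) * ((N : ℝ) - 1) / 2) * Q2 := by
    have hs : Q = ∑ p ∈ Finset.univ.sigma (fun s : Fin N => Finset.Ioi s),
        ‖a p.1 - a p.2‖ := by rw [hQ, Finset.sum_sigma]
    have hs2 : Q2 = ∑ p ∈ Finset.univ.sigma (fun s : Fin N => Finset.Ioi s),
        ‖a p.1 - a p.2‖ ^ 2 := by rw [hQ2, Finset.sum_sigma]
    have h1 := sq_sum_le_card_mul_sum_sq
      (s := Finset.univ.sigma (fun s : Fin N => Finset.Ioi s))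
      (f := fun p => ‖a p.1 - a p.2‖)
    have hQ2nn : 0 ≤ Q2 := by
      rw [hQ2]; positivity
    rw [← hs, ← hs2] at h1
    have hc := aux_card (N := N)
    nlinarith [hQ2nn]
  have hQ2pos : 0 ≤ Q2 := by rw [hQ2]; positivity
  have hdenom : 0 < 2 * (N : ℝ) - 2 := by linarith
  have hND : 0 < (N : ℝ) * ((N : ℝ) - 1) := by nlinarith
  have key : (2 / ((N : ℝ) * ((N : ℝ) - 1))) * Q ^ 2 ≤ Q2 := by
    rw [div_mul_eq_mul_div, div_le_iff₀ hND]
    nlinarith [hCS]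
  rw [ge_iff_le]
  calc (1 / (2 * (N : ℝ) - 2)) * (P + (2 / ((N : ℝ) * ((N : ℝ) - 1))) * Q ^ 2)
      ≤ (1 / (2 * (N : ℝ) - 2)) * (P + Q2) := by
        apply mul_le_mul_of_nonneg_left _ (by positivity)
        linarith
    _ = ∑ s, ‖a s‖ ^ 2 := by
        rw [hpar, one_div, ← mul_assoc, show (2 * (N : ℝ) - 2) = 2 * ((N : ℝ) - 1) by ring,
          inv_mul_cancel₀ (ne_of_gt (by linarith)), one_mul]
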